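/- If (p,q) is a meromorphic algebro-geometric AKNS potential with p and q not identically zero, then for every point x₀ ∈ ℂ one has ord_{x₀}(p) + ord_{x₀}(q) ≥ −2, where ord_{x₀}(f) denotes the order of the meromorphic function f at x₀ (negative at a pole). In particular, at every point the sum of the pole orders of p and q is at most 2. -/

import Mathlib

open Complex

noncomputable section

/-- `akPoly n f E x = ∑_{ℓ=0}^{n} f_{n-ℓ}(x) E^ℓ`. -/
def akPoly (n : ℕ) (f : ℕ → ℂ → ℂ) (E x : ℂ) : ℂ :=
  ∑ ℓ ∈ Finset.range (n + 1), f (n - ℓ) x * E ^ ℓ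

/-- The stationary zero-curvature system `F_x = -2iE F + 2q G`, `G_x = p F + q H`,
`H_x = 2iE H + 2p G` holds off the exceptional set `S`. -/
def ZeroCurvOn (p q : ℂ → ℂ) (n : ℕ) (f g h : ℕ → ℂ → ℂ) (S : Set ℂ) : Prop :=
  ∀ E : ℂ, ∀ x ∉ S,
    deriv (fun y => akPoly n f E y) x
      = -2 * I * E * akPoly n f E x + 2 * q x * akPoly (n + 1) g E x ∧
    deriv (fun y => akPoly (n + 1) g E y) x
      = p x * akPoly n f E x + q x * akPoly n h E x ∧
    deriv (fun y => akPoly n h E y) x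
      = 2 * I * E * akPoly n h E x + 2 * p x * akPoly (n + 1) g E x

/-- `(p,q)` is a meromorphic algebro-geometric AKNS potential with data `n, f, g, h`,
where all functions involved are meromorphic on `ℂ` and analytic off the closed
countable set `S`, and `f 0 = -i q`, `g 0 = 1`, `h 0 = i p`. -/
def IsAGData (p q : ℂ → ℂ) (n : ℕ) (f g h : ℕ → ℂ → ℂ) (S : Set ℂ) : Prop :=
  MeromorphicOn p Set.univ ∧ MeromorphicOn q Set.univ ∧
  (∀ k, MeromorphicOn (f k) Set.univ) ∧
  (∀ k, MeromorphicOn (g k) Set.univ) ∧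
  (∀ k, MeromorphicOn (h k) Set.univ) ∧
  S.Countable ∧ IsClosed S ∧
  (∀ x ∉ S, AnalyticAt ℂ p x ∧ AnalyticAt ℂ q x ∧
    (∀ k, AnalyticAt ℂ (f k) x ∧ AnalyticAt ℂ (g k) x ∧ AnalyticAt ℂ (h k) x)) ∧
  f 0 = (fun x => -I * q x) ∧
  g 0 = (fun _ => (1 : ℂ)) ∧
  h 0 = (fun x => I * p x) ∧
  ZeroCurvOn p q n f g h S

/-- `(p,q)` is a meromorphic algebro-geometric AKNS potential. -/
def IsAGAKNS (p q : ℂ → ℂ) : Prop :=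
  ∃ n f g h S, IsAGData p q n f g h S

/-- `(ψ₁, ψ₂)` is a solution of the AKNS system `JΨ' + QΨ = EΨ` on `ℂ`
(away from a closed countable exceptional set). -/
def SolvesAKNS (p q : ℂ → ℂ) (E : ℂ) (ψ₁ ψ₂ : ℂ → ℂ) : Prop :=
  ∃ S : Set ℂ, S.Countable ∧ IsClosed S ∧ ∀ x ∉ S,
    DifferentiableAt ℂ ψ₁ x ∧ DifferentiableAt ℂ ψ₂ x ∧
    I * deriv ψ₁ x - I * q x * ψ₂ x = E * ψ₁ x ∧
    -I * deriv ψ₂ x + I * p x * ψ₁ x = E * ψ₂ x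

/-- The AKNS system with potentials `(p,q)` and spectral parameter `E` admits two solutions,
each meromorphic on all of `ℂ`, with Wronskian `ψ₁₁ψ₂₂ - ψ₁₂ψ₂₁` not identically zero. -/
def MeroFundSys (p q : ℂ → ℂ) (E : ℂ) : Prop :=
  ∃ ψ₁₁ ψ₁₂ ψ₂₁ ψ₂₂ : ℂ → ℂ,
    MeromorphicOn ψ₁₁ Set.univ ∧ MeromorphicOn ψ₁₂ Set.univ ∧
    MeromorphicOn ψ₂₁ Set.univ ∧ MeromorphicOn ψ₂₂ Set.univ ∧
    SolvesAKNS p q E ψ₁₁ ψ₁₂ ∧ SolvesAKNS p q E ψ₂₁ ψ₂₂ ∧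
    ∃ x, ψ₁₁ x * ψ₂₂ x - ψ₁₂ x * ψ₂₁ x ≠ 0

/-- `f` is elliptic with fundamental periods `2ω₁`, `2ω₃`: meromorphic on `ℂ`
and doubly periodic. -/
def IsEllipticWith (ω₁ ω₃ : ℂ) (f : ℂ → ℂ) : Prop :=
  MeromorphicOn f Set.univ ∧
  (∀ z, f (z + 2 * ω₁) = f z) ∧ (∀ z, f (z + 2 * ω₃) = f z)


open Metric Filter Set
open scoped Topology

set_option maxHeartbeats 1000000

/-- Compatibility shim: the order of a meromorphic function. -/
def MeromorphicAt.order {f : ℂ → ℂ} {x : ℂ} (_ : MeromorphicAt f x) : WithTop ℤ :=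
  meromorphicOrderAt f x

lemma MeromorphicAt.order_eq_top_iff {f : ℂ → ℂ} {x : ℂ} (hf : MeromorphicAt f x) :
    hf.order = ⊤ ↔ ∀ᶠ z in 𝓝[≠] x, f z = 0 :=
  meromorphicOrderAt_eq_top_iff

lemma MeromorphicAt.order_eq_int_iff {f : ℂ → ℂ} {x : ℂ} (hf : MeromorphicAt f x) (n : ℤ) :
    hf.order = n ↔
      ∃ g : ℂ → ℂ, AnalyticAt ℂ g x ∧ g x ≠ 0 ∧ ∀ᶠ z in 𝓝[≠] x, f z = (z - x) ^ n • g z :=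
  meromorphicOrderAt_eq_int_iff hf

/-- Compatibility shim: the order of an analytic function. -/
def AnalyticAt.order {f : ℂ → ℂ} {x : ℂ} (_ : AnalyticAt ℂ f x) : WithTop ℕ :=
  analyticOrderAt f x

lemma AnalyticAt.meromorphicAt_order {f : ℂ → ℂ} {x : ℂ} (hf : AnalyticAt ℂ f x) :
    hf.meromorphicAt.order = WithTop.map (Nat.cast : ℕ → ℤ) hf.order :=
  hf.meromorphicOrderAt_eq

lemma analyticAt_deriv {f : ℂ → ℂ} {x : ℂ} (hf : AnalyticAt ℂ f x) :
    AnalyticAt ℂ (deriv f) x := by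
  obtain ⟨t, ht, hto, hxt⟩ := _root_.eventually_nhds_iff.mp hf.eventually_analyticAt
  exact (AnalyticOnNhd.deriv_of_isOpen (fun y hy => ht y hy) hto) x hxt

/-- A germ equality on the punctured neighborhood filter holds on a punctured ball. -/
lemma exists_ball_of_eventually {f g : ℂ → ℂ} {x₀ : ℂ}
    (h : ∀ᶠ z in 𝓝[≠] x₀, f z = g z) :
    ∃ δ > 0, ∀ z ∈ ball x₀ δ \ {x₀}, f z = g z := by
  rw [eventually_nhdsWithin_iff] at h
  obtain ⟨δ, hδ, hb⟩ := Metric.eventually_nhds_iff_ball.mp h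
  exact ⟨δ, hδ, fun z hz => hb z hz.1 hz.2⟩

/-- A punctured ball is a punctured neighborhood. -/
lemma pball_mem_nhdsNE {x₀ : ℂ} {δ : ℝ} (hδ : 0 < δ) :
    ball x₀ δ \ {x₀} ∈ 𝓝[≠] x₀ :=
  diff_mem_nhdsWithin_compl (ball_mem_nhds x₀ hδ) {x₀}

lemma eventually_of_pball {f g : ℂ → ℂ} {x₀ : ℂ} {δ : ℝ} (hδ : 0 < δ)
    (h : ∀ z ∈ ball x₀ δ \ {x₀}, f z = g z) : f =ᶠ[𝓝[≠] x₀] g :=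
  Filter.eventually_of_mem (pball_mem_nhdsNE hδ) h

/-- Orders of meromorphic functions agree for germ-equal functions. -/
lemma mero_order_congr {f g : ℂ → ℂ} {x₀ : ℂ} (hf : MeromorphicAt f x₀)
    (hg : MeromorphicAt g x₀) (h : f =ᶠ[𝓝[≠] x₀] g) : hf.order = hg.order := by
  rcases eq_or_ne hf.order ⊤ with ht | ht
  · rw [ht, eq_comm, hg.order_eq_top_iff]
    rw [hf.order_eq_top_iff] at ht
    filter_upwards [ht, h] with z h1 h2
    rw [← h2]; exact h1
  · obtain ⟨m, hm⟩ := WithTop.ne_top_iff_exists.mp ht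
    rw [← hm, eq_comm, hg.order_eq_int_iff]
    obtain ⟨φ, h1, h2, h3⟩ := (hf.order_eq_int_iff m).mp hm.symm
    refine ⟨φ, h1, h2, ?_⟩
    filter_upwards [h3, h] with z h4 h5
    rw [← h5]; exact h4

/-- The order of a product is the sum of the orders. -/
lemma mero_order_mul {f g : ℂ → ℂ} {x₀ : ℂ} (hf : MeromorphicAt f x₀)
    (hg : MeromorphicAt g x₀) :
    (hf.mul hg).order = hf.order + hg.order := by
  rcases eq_or_ne hf.order ⊤ with ht | ht
  · rw [ht, top_add, (hf.mul hg).order_eq_top_iff]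
    rw [hf.order_eq_top_iff] at ht
    filter_upwards [ht] with z h1
    show f z * g z = 0
    rw [h1, zero_mul]
  · rcases eq_or_ne hg.order ⊤ with ht2 | ht2
    · rw [ht2, add_top, (hf.mul hg).order_eq_top_iff]
      rw [hg.order_eq_top_iff] at ht2
      filter_upwards [ht2] with z h1
      show f z * g z = 0
      rw [h1, mul_zero]
    · obtain ⟨m, hm⟩ := WithTop.ne_top_iff_exists.mp ht
      obtain ⟨k, hk⟩ := WithTop.ne_top_iff_exists.mp ht2
      obtain ⟨φ, h1, h2, h3⟩ := (hf.order_eq_int_iff m).mp hm.symm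
      obtain ⟨ψ, h4, h5, h6⟩ := (hg.order_eq_int_iff k).mp hk.symm
      rw [← hm, ← hk, ← WithTop.coe_add]
      rw [(hf.mul hg).order_eq_int_iff]
      refine ⟨fun z => φ z * ψ z, h1.mul h4, by simp [h2, h5], ?_⟩
      filter_upwards [h3, h6, self_mem_nhdsWithin] with z hz1 hz2 hz3
      show f z * g z = _
      rw [hz1, hz2]
      have hzz : z - x₀ ≠ 0 := sub_ne_zero.mpr hz3
      simp only [smul_eq_mul]
      rw [zpow_add₀ hzz]
      ring

/-- Order of an analytic function is nonnegative. -/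
lemma mero_order_nonneg {g : ℂ → ℂ} {x₀ : ℂ} (hg : AnalyticAt ℂ g x₀) :
    0 ≤ hg.meromorphicAt.order := by
  rw [hg.meromorphicAt_order]
  rcases eq_or_ne hg.order ⊤ with ht | ht
  · rw [ht, WithTop.map_top]; exact le_top
  · obtain ⟨m, hm⟩ := WithTop.ne_top_iff_exists.mp ht
    rw [← hm, WithTop.map_coe]
    exact_mod_cast Int.ofNat_nonneg m




/-- Main derivative-order lemma: order of `w' + c·w`. -/
lemma order_deriv_linear {w : ℂ → ℂ} {x₀ : ℂ} (hw : MeromorphicAt w x₀) (c : ℂ) :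
    ∃ hD : MeromorphicAt (fun z => deriv w z + c * w z) x₀,
      (hw.order = ⊤ → hD.order = ⊤) ∧
      (hw.order = 0 → 0 ≤ hD.order) ∧
      (∀ m : ℤ, m ≠ 0 → hw.order = (m : WithTop ℤ) → hD.order = ((m - 1 : ℤ) : WithTop ℤ)) := by
  rcases eq_or_ne hw.order ⊤ with ht | ht
  · have h0 : ∀ᶠ z in 𝓝[≠] x₀, w z = 0 := hw.order_eq_top_iff.mp ht
    rw [eventually_nhdsWithin_iff] at h0
    obtain ⟨δ, hδ, hb⟩ := Metric.eventually_nhds_iff_ball.mp h0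
    have hD0 : ∀ z ∈ ball x₀ δ \ {x₀}, deriv w z + c * w z = 0 := by
      intro z hz
      have hop : IsOpen (ball x₀ δ \ {x₀}) := isOpen_ball.sdiff isClosed_singleton
      have hev : w =ᶠ[𝓝 z] (fun _ => (0:ℂ)) :=
        Filter.eventually_of_mem (hop.mem_nhds hz) (fun u hu => hb u hu.1 hu.2)
      have hder : deriv w z = 0 := by rw [hev.deriv_eq, deriv_const]
      rw [hder, hb z hz.1 hz.2, mul_zero, add_zero]
    have hger : (fun z => deriv w z + c * w z) =ᶠ[𝓝[≠] x₀] (fun _ => (0:ℂ)) :=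
      Filter.eventually_of_mem (pball_mem_nhdsNE hδ) hD0
    have hD : MeromorphicAt (fun z => deriv w z + c * w z) x₀ :=
      (MeromorphicAt.const 0 x₀).congr hger.symm
    refine ⟨hD, fun _ => ?_, fun h0' => absurd (ht ▸ h0') (by simp), fun m hm hmo => ?_⟩
    · rw [hD.order_eq_top_iff]; exact hger
    · exact absurd (ht ▸ hmo) (by simp)
  · obtain ⟨m, hm⟩ := WithTop.ne_top_iff_exists.mp ht
    obtain ⟨φ, hφ, hφ0, heq⟩ := (hw.order_eq_int_iff m).mp hm.symm
    rw [eventually_nhdsWithin_iff] at heq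
    obtain ⟨δ₁, hδ₁, hb₁⟩ := Metric.eventually_nhds_iff_ball.mp heq
    obtain ⟨δ₂, hδ₂, hb₂⟩ := Metric.eventually_nhds_iff_ball.mp hφ.eventually_analyticAt
    set δ := min δ₁ δ₂ with hδdef
    have hδ : 0 < δ := lt_min hδ₁ hδ₂
    set G : ℂ → ℂ := fun z => (m : ℂ) * φ z + (z - x₀) * (deriv φ z + c * φ z) with hGdef
    have key : ∀ z ∈ ball x₀ δ \ {x₀},
        deriv w z + c * w z = (z - x₀) ^ (m - 1 : ℤ) * G z := by
      intro z hz
      have hzb : z ∈ ball x₀ δ := hz.1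
      have hzne : z ≠ x₀ := hz.2
      have hzz : z - x₀ ≠ 0 := sub_ne_zero.mpr hzne
      have hop : IsOpen (ball x₀ δ \ {x₀}) := isOpen_ball.sdiff isClosed_singleton
      have hev : w =ᶠ[𝓝 z] (fun u => (u - x₀) ^ (m : ℤ) • φ u) :=
        Filter.eventually_of_mem (hop.mem_nhds hz)
          (fun u hu => hb₁ u (lt_of_lt_of_le (mem_ball.mp hu.1) (min_le_left _ _)) hu.2)
      have hφz : AnalyticAt ℂ φ z :=
        hb₂ z (lt_of_lt_of_le (mem_ball.mp hzb) (min_le_right _ _))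
      have h1 : HasDerivAt (fun u : ℂ => u - x₀) 1 z := (hasDerivAt_id z).sub_const x₀
      have h2 : HasDerivAt (fun u : ℂ => (u - x₀) ^ (m : ℤ))
          (((m : ℂ) * (z - x₀) ^ (m - 1 : ℤ)) * 1) z :=
        by have := HasDerivAt.comp z (hasDerivAt_zpow m (z - x₀) (Or.inl hzz)) h1; exact this
      have h3 : HasDerivAt φ (deriv φ z) z := hφz.differentiableAt.hasDerivAt
      have h4 : HasDerivAt (fun u : ℂ => (u - x₀) ^ (m : ℤ) * φ u)
          ((((m : ℂ) * (z - x₀) ^ (m - 1 : ℤ)) * 1) * φ z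
            + (z - x₀) ^ (m : ℤ) * deriv φ z) z := h2.mul h3
      have hder : deriv w z = ((m : ℂ) * (z - x₀) ^ (m - 1 : ℤ)) * φ z
          + (z - x₀) ^ (m : ℤ) * deriv φ z := by
        have := hev.deriv_eq
        rw [this]
        have h4' := h4.deriv
        simpa [smul_eq_mul, mul_one] using h4'
      have hwz : w z = (z - x₀) ^ (m : ℤ) * φ z := by
        have := hb₁ z (lt_of_lt_of_le (mem_ball.mp hzb) (min_le_left _ _)) hzne
        simpa [smul_eq_mul] using this
      have hsplit : (z - x₀) ^ (m : ℤ) = (z - x₀) ^ (m - 1 : ℤ) * (z - x₀) := by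
        rw [← zpow_add_one₀ hzz]
        norm_num
      rw [hder, hwz, hsplit, hGdef]
      ring
    have hGan : AnalyticAt ℂ G x₀ := by
      apply AnalyticAt.add
      · exact analyticAt_const.mul hφ
      · exact ((analyticAt_id.sub analyticAt_const)).mul
          ((analyticAt_deriv hφ).add (analyticAt_const.mul hφ))
    rcases eq_or_ne m 0 with hm0 | hm0
    · -- m = 0 : the function is analytic near x₀
      subst hm0
      have key0 : ∀ z ∈ ball x₀ δ \ {x₀},
          deriv w z + c * w z = deriv φ z + c * φ z := by
        intro z hz
        have := key z hz
        have hzz : z - x₀ ≠ 0 := sub_ne_zero.mpr hz.2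
        rw [this, hGdef]
        simp only [Int.cast_zero, zero_mul, zero_add, zero_sub]
        rw [zpow_neg, zpow_one]
        field_simp
      have hψ : AnalyticAt ℂ (fun z => deriv φ z + c * φ z) x₀ :=
        (analyticAt_deriv hφ).add (analyticAt_const.mul hφ)
      have hger : (fun z => deriv w z + c * w z) =ᶠ[𝓝[≠] x₀] (fun z => deriv φ z + c * φ z) :=
        Filter.eventually_of_mem (pball_mem_nhdsNE hδ) key0
      have hD : MeromorphicAt (fun z => deriv w z + c * w z) x₀ :=
        hψ.meromorphicAt.congr hger.symm
      refine ⟨hD, ?_, ?_, ?_⟩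
      · intro htop; rw [htop] at hm; exact absurd hm.symm (by simp)
      · intro _
        have horder : hD.order = hψ.meromorphicAt.order := by
          rcases eq_or_ne hψ.meromorphicAt.order ⊤ with h' | h'
          · rw [h', hD.order_eq_top_iff]
            have := hψ.meromorphicAt.order_eq_top_iff.mp h'
            filter_upwards [this, hger] with u h1 h2; rw [h2]; exact h1
          · obtain ⟨k, hk⟩ := WithTop.ne_top_iff_exists.mp h'
            rw [← hk, hD.order_eq_int_iff]
            obtain ⟨ψ', a1, a2, a3⟩ := (hψ.meromorphicAt.order_eq_int_iff k).mp hk.symm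
            exact ⟨ψ', a1, a2, by filter_upwards [a3, hger] with u h1 h2; rw [h2]; exact h1⟩
        rw [horder]
        rw [hψ.meromorphicAt_order]
        rcases eq_or_ne hψ.order ⊤ with h' | h'
        · rw [h', WithTop.map_top]; exact le_top
        · obtain ⟨k, hk⟩ := WithTop.ne_top_iff_exists.mp h'
          rw [← hk, WithTop.map_coe]
          exact_mod_cast Int.ofNat_nonneg k
      · intro m' hm' hmo
        rw [← hm] at hmo
        have : (m' : WithTop ℤ) = ((0:ℤ) : WithTop ℤ) := by exact_mod_cast hmo.symm
        exact absurd (WithTop.coe_inj.mp this) hm'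
    · -- m ≠ 0 : order is exactly m - 1
      have hGx : G x₀ ≠ 0 := by
        rw [hGdef]
        simp only [sub_self, zero_mul, add_zero]
        exact mul_ne_zero (by exact_mod_cast Int.cast_ne_zero.mpr hm0) hφ0
      have hger : (fun z => deriv w z + c * w z) =ᶠ[𝓝[≠] x₀]
          (fun z => (z - x₀) ^ (m - 1 : ℤ) * G z) :=
        Filter.eventually_of_mem (pball_mem_nhdsNE hδ) key
      have hbase : MeromorphicAt (fun z : ℂ => (z - x₀) ^ (m - 1 : ℤ) * G z) x₀ := by
        have h5 : MeromorphicAt ((fun z : ℂ => z - x₀) ^ (m - 1 : ℤ)) x₀ :=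
          ((MeromorphicAt.id x₀).sub (MeromorphicAt.const x₀ x₀)).zpow (m - 1)
        exact h5.mul hGan.meromorphicAt
      have hD : MeromorphicAt (fun z => deriv w z + c * w z) x₀ := hbase.congr hger.symm
      refine ⟨hD, ?_, ?_, ?_⟩
      · intro htop; rw [htop] at hm; exact absurd hm.symm (by simp)
      · intro h0'; rw [← hm] at h0'
        have : (m : WithTop ℤ) = ((0:ℤ) : WithTop ℤ) := by exact_mod_cast h0'
        exact absurd (WithTop.coe_inj.mp this) hm0
      · intro m' hm' hmo
        have hmm : m' = m := by
          rw [← hm] at hmo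
          symm; exact_mod_cast hmo
        subst hmm
        rw [hD.order_eq_int_iff]
        exact ⟨G, hGan, hGx, by filter_upwards [hger] with u h1; rw [h1]; simp [smul_eq_mul]⟩




/-- The punctured ball in ℂ is path connected. -/
lemma isPathConnected_pball {x₀ : ℂ} {ε : ℝ} (hε : 0 < ε) :
    IsPathConnected (ball x₀ ε \ {x₀}) := by
  have hsrc : IsPathConnected ((Ioo (0:ℝ) ε) ×ˢ (univ : Set ℝ)) := by
    apply Convex.isPathConnected ((convex_Ioo 0 ε).prod convex_univ)
    exact ⟨(ε/2, 0), ⟨by constructor <;> linarith, trivial⟩⟩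
  have hcont : Continuous (fun t : ℝ × ℝ => x₀ + (t.1 : ℂ) * exp ((t.2 : ℂ) * I)) := by
    fun_prop
  have himg := hsrc.image hcont
  have heq : (fun t : ℝ × ℝ => x₀ + (t.1 : ℂ) * exp ((t.2 : ℂ) * I)) ''
      ((Ioo (0:ℝ) ε) ×ˢ (univ : Set ℝ)) = ball x₀ ε \ {x₀} := by
    ext z
    constructor
    · rintro ⟨⟨r, θ⟩, ⟨⟨hr0, hrε⟩, -⟩, rfl⟩
      constructor
      · rw [mem_ball, dist_eq]
        simp only [add_sub_cancel_left]
        rw [norm_mul, norm_exp_ofReal_mul_I, mul_one, Complex.norm_real, Real.norm_eq_abs, abs_of_pos hr0]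
        exact hrε
      · simp only [mem_singleton_iff, add_eq_left]
        intro hcon
        rcases mul_eq_zero.mp hcon with h | h
        · exact absurd (by exact_mod_cast h) (ne_of_gt hr0)
        · exact (exp_ne_zero _) h
    · rintro ⟨hzb, hzne⟩
      have hw : z - x₀ ≠ 0 := sub_ne_zero.mpr hzne
      refine ⟨(‖z - x₀‖, arg (z - x₀)), ⟨⟨?_, ?_⟩, trivial⟩, ?_⟩
      · exact norm_pos_iff.mpr hw
      · rw [mem_ball, dist_eq] at hzb; exact hzb
      · simp only
        rw [norm_mul_exp_arg_mul_I (z - x₀)]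
        ring
  rw [heq] at himg
  exact himg

/-- A differentiable function with zero derivative on a ball is constant. -/
lemma const_on_ball {v : ℂ → ℂ} {c : ℂ} {δ : ℝ}
    (hv : ∀ y ∈ ball c δ, AnalyticAt ℂ v y)
    (hd : ∀ y ∈ ball c δ, deriv v y = 0) {y : ℂ} (hy : y ∈ ball c δ) (hc : c ∈ ball c δ) :
    v y = v c := by
  have hdiff : DifferentiableOn ℂ v (ball c δ) :=
    fun u hu => ((hv u hu).differentiableAt).differentiableWithinAt
  have hbound : ∀ u ∈ ball c δ, ‖fderivWithin ℂ v (ball c δ) u‖ ≤ 0 := by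
    intro u hu
    rw [fderivWithin_of_isOpen isOpen_ball hu]
    have h1 : HasDerivAt v 0 u := by
      have := (hv u hu).differentiableAt.hasDerivAt
      rwa [hd u hu] at this
    rw [h1.hasFDerivAt.fderiv]
    simp
  have := (convex_ball c δ).norm_image_sub_le_of_norm_fderivWithin_le hdiff hbound hc hy
  simp only [zero_mul] at this
  have h2 : ‖v y - v c‖ = 0 := le_antisymm this (norm_nonneg _)
  exact sub_eq_zero.mp (norm_eq_zero.mp h2)

/-- An analytic function with zero derivative on an open preconnected set is constant. -/
lemma eq_const_of_deriv_zero {W : Set ℂ} (hWo : IsOpen W) (hWc : IsPreconnected W)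
    {u : ℂ → ℂ} (hu : ∀ y ∈ W, AnalyticAt ℂ u y) (hd : ∀ y ∈ W, deriv u y = 0)
    {y z : ℂ} (hy : y ∈ W) (hz : z ∈ W) : u y = u z := by
  have hA : AnalyticOnNhd ℂ u W := fun w hw => hu w hw
  have hB : AnalyticOnNhd ℂ (fun _ => u z) W := fun w _ => analyticAt_const
  obtain ⟨δ, hδ, hball⟩ := Metric.isOpen_iff.mp hWo z hz
  have hev : u =ᶠ[𝓝 z] (fun _ => u z) := by
    apply Filter.eventually_of_mem (ball_mem_nhds z hδ)
    intro w hw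
    exact const_on_ball (fun a ha => hu a (hball ha)) (fun a ha => hd a (hball ha)) hw
      (mem_ball_self hδ)
  exact hA.eqOn_of_preconnected_of_eventuallyEq hB hWc hz hev hy

/-- Two continuous functions on an open set agreeing off a countable set agree everywhere. -/
lemma eqOn_of_eqOn_compl_countable {U : Set ℂ} (hU : IsOpen U) {S : Set ℂ} (hS : S.Countable)
    {v w : ℂ → ℂ} (hv : ∀ y ∈ U, ContinuousAt v y) (hw : ∀ y ∈ U, ContinuousAt w y)
    (h : ∀ y ∈ U, y ∉ S → v y = w y) : ∀ y ∈ U, v y = w y := by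
  intro y hy
  have hdense : Dense Sᶜ := hS.dense_compl ℂ
  have hclos : y ∈ closure (U ∩ Sᶜ) := by
    rw [_root_.mem_closure_iff]
    intro o ho hyo
    obtain ⟨z, hz⟩ := hdense.inter_open_nonempty (o ∩ U) (ho.inter hU) ⟨y, hyo, hy⟩
    exact ⟨z, hz.1.1, hz.1.2, hz.2⟩
  have hne : (𝓝[U ∩ Sᶜ] y).NeBot := mem_closure_iff_nhdsWithin_neBot.mp hclos
  have hv' : Tendsto v (𝓝[U ∩ Sᶜ] y) (𝓝 (v y)) :=
    ((hv y hy).continuousWithinAt).tendsto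
  have hw' : Tendsto w (𝓝[U ∩ Sᶜ] y) (𝓝 (w y)) :=
    ((hw y hy).continuousWithinAt).tendsto
  have heq : v =ᶠ[𝓝[U ∩ Sᶜ] y] w :=
    Filter.eventually_of_mem self_mem_nhdsWithin (fun z hz => h z hz.1 hz.2)
  exact tendsto_nhds_unique (hv'.congr' heq) hw'





lemma akPoly_zero (f : ℕ → ℂ → ℂ) (E x : ℂ) : akPoly 0 f E x = f 0 x := by
  simp [akPoly]

lemma akPoly_succ (n : ℕ) (f : ℕ → ℂ → ℂ) (E x : ℂ) :
    akPoly (n + 1) f E x = E * akPoly n f E x + f (n + 1) x := by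
  unfold akPoly
  rw [Finset.sum_range_succ' (fun ℓ => f (n + 1 - ℓ) x * E ^ ℓ) (n + 1)]
  simp only [Nat.sub_zero, pow_zero, mul_one, Nat.succ_sub_succ_eq_sub]
  rw [Finset.mul_sum]
  congr 1
  apply Finset.sum_congr rfl
  intro ℓ _
  ring

lemma akPoly_analyticAt {n : ℕ} {f : ℕ → ℂ → ℂ} {E y : ℂ}
    (h : ∀ k ≤ n, AnalyticAt ℂ (f k) y) :
    AnalyticAt ℂ (fun z => akPoly n f E z) y := by
  unfold akPoly
  apply Finset.analyticAt_fun_sum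
  intro ℓ hℓ
  exact (h (n - ℓ) (Nat.sub_le _ _)).mul analyticAt_const

lemma akPoly_meromorphicAt {n : ℕ} {f : ℕ → ℂ → ℂ} {E x₀ : ℂ}
    (h : ∀ k ≤ n, MeromorphicAt (f k) x₀) :
    MeromorphicAt (fun z => akPoly n f E z) x₀ := by
  induction n with
  | zero =>
    have : (fun z => akPoly 0 f E z) = f 0 := by funext z; rw [akPoly_zero]
    rw [this]; exact h 0 le_rfl
  | succ m ih =>
    have heq : (fun z => akPoly (m+1) f E z)
        = fun z => E * akPoly m f E z + f (m+1) z := by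
      funext z; rw [akPoly_succ]
    rw [heq]
    exact ((MeromorphicAt.const E x₀).mul
      (ih (fun k hk => h k (hk.trans (Nat.le_succ m))))).add (h (m+1) le_rfl)

lemma deriv_akPoly {n : ℕ} {f : ℕ → ℂ → ℂ} {E y : ℂ}
    (h : ∀ k ≤ n, DifferentiableAt ℂ (f k) y) :
    deriv (fun z => akPoly n f E z) y
      = ∑ ℓ ∈ Finset.range (n + 1), deriv (f (n - ℓ)) y * E ^ ℓ := by
  unfold akPoly
  rw [deriv_fun_sum (fun ℓ _ => ((h (n - ℓ) (Nat.sub_le _ _)).mul_const (E ^ ℓ)))]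
  apply Finset.sum_congr rfl
  intro ℓ _
  exact deriv_mul_const (h (n - ℓ) (Nat.sub_le _ _)) (E ^ ℓ)

/-- The Horner/synthetic-division identity. -/
lemma akPoly_horner (n : ℕ) (f : ℕ → ℂ → ℂ) (E E₀ x : ℂ) :
    akPoly (n + 1) f E x
      = (E - E₀) * akPoly n (fun k z => akPoly k f E₀ z) E x + akPoly (n + 1) f E₀ x := by
  induction n with
  | zero =>
    rw [akPoly_succ, akPoly_succ, akPoly_zero, akPoly_zero, akPoly_zero]
    ring
  | succ m ih =>
    rw [akPoly_succ (m+1) f E x, ih, akPoly_succ m (fun k z => akPoly k f E₀ z) E x,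
      akPoly_succ (m+1) f E₀ x]
    ring




open Polynomial in
lemma exists_root_aux (n : ℕ) (a b c : ℕ → ℂ) (hb : b 0 = 1) :
    ∃ E₀ : ℂ, (∑ ℓ ∈ Finset.range (n+2), b (n+1-ℓ) * E₀^ℓ)^2
      - (∑ ℓ ∈ Finset.range (n+1), a (n-ℓ) * E₀^ℓ)
        * (∑ ℓ ∈ Finset.range (n+1), c (n-ℓ) * E₀^ℓ) = 0 := by
  set GP : ℂ[X] := ∑ ℓ ∈ Finset.range (n+2), C (b (n+1-ℓ)) * X^ℓ with hGP
  set FP : ℂ[X] := ∑ ℓ ∈ Finset.range (n+1), C (a (n-ℓ)) * X^ℓ with hFP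
  set HP : ℂ[X] := ∑ ℓ ∈ Finset.range (n+1), C (c (n-ℓ)) * X^ℓ with hHP
  have hGdeg : GP.degree ≤ (n+1 : ℕ) := by
    rw [hGP]
    refine (degree_sum_le _ _).trans ?_
    apply Finset.sup_le
    intro ℓ hℓ
    refine (degree_C_mul_X_pow_le _ _).trans ?_
    exact_mod_cast Nat.cast_le.mpr (Nat.lt_succ_iff.mp (Finset.mem_range.mp hℓ))
  have hFdeg : FP.degree ≤ (n : ℕ) := by
    rw [hFP]
    refine (degree_sum_le _ _).trans ?_
    apply Finset.sup_le
    intro ℓ hℓ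
    refine (degree_C_mul_X_pow_le _ _).trans ?_
    exact_mod_cast Nat.cast_le.mpr (Nat.lt_succ_iff.mp (Finset.mem_range.mp hℓ))
  have hHdeg : HP.degree ≤ (n : ℕ) := by
    rw [hHP]
    refine (degree_sum_le _ _).trans ?_
    apply Finset.sup_le
    intro ℓ hℓ
    refine (degree_C_mul_X_pow_le _ _).trans ?_
    exact_mod_cast Nat.cast_le.mpr (Nat.lt_succ_iff.mp (Finset.mem_range.mp hℓ))
  have hcoeff : GP.coeff (n+1) = 1 := by
    rw [hGP, finset_sum_coeff]
    rw [Finset.sum_eq_single (n+1)]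
    · rw [coeff_C_mul_X_pow]; simp [hb]
    · intro ℓ _ hne
      rw [coeff_C_mul_X_pow]
      simp [Ne.symm hne]
    · intro hmem
      exact absurd (Finset.self_mem_range_succ (n+1)) hmem
  have hGdeg' : GP.degree = (n+1 : ℕ) := by
    apply le_antisymm hGdeg
    exact le_degree_of_ne_zero (by rw [hcoeff]; exact one_ne_zero)
  have hG2 : (GP^2).degree = (2*n+2 : ℕ) := by
    rw [degree_pow, hGdeg']
    rw [← Nat.cast_smul_eq_nsmul (R := ℕ)]
    push_cast
    ring_nf
  have hFH : (FP * HP).degree ≤ (2*n : ℕ) := by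
    refine (degree_mul_le _ _).trans ?_
    calc FP.degree + HP.degree ≤ (n : ℕ) + (n : ℕ) := add_le_add hFdeg hHdeg
      _ = ((2*n : ℕ) : WithBot ℕ) := by push_cast; ring
  have hrdeg : (GP^2 - FP*HP).degree = (2*n+2 : ℕ) := by
    rw [degree_sub_eq_left_of_degree_lt]
    · exact hG2
    · rw [hG2]
      calc (FP*HP).degree ≤ ((2*n : ℕ) : WithBot ℕ) := hFH
        _ < ((2*n+2 : ℕ) : WithBot ℕ) := by exact_mod_cast Nat.lt_succ_of_lt (Nat.lt_succ_self _)
  have hpos : 0 < (GP^2 - FP*HP).degree := by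
    rw [hrdeg]
    exact_mod_cast Nat.succ_pos _
  obtain ⟨E₀, hroot⟩ := Complex.exists_root hpos
  refine ⟨E₀, ?_⟩
  have := hroot
  rw [IsRoot, eval_sub, eval_pow, eval_mul] at this
  rw [hGP, hFP, hHP] at this
  simp only [eval_finset_sum, eval_mul, eval_C, eval_pow, eval_X] at this
  exact this






lemma order_const' {c : ℂ} (hc : c ≠ 0) (x₀ : ℂ) :
    (MeromorphicAt.const c x₀).order = 0 := by
  rw [show (0 : WithTop ℤ) = ((0:ℤ) : WithTop ℤ) from rfl, MeromorphicAt.order_eq_int_iff]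
  exact ⟨fun _ => c, analyticAt_const, hc, by filter_upwards with z; simp⟩


/-- Either the order bound holds, or `F,G,H` all vanish identically near `x₀` at some root `E₀`. -/
lemma dichotomy (n : ℕ) (f g h : ℕ → ℂ → ℂ) (p q : ℂ → ℂ) (x₀ : ℂ) (ε : ℝ)
    (hε : 0 < ε)
    (hfa : ∀ k ≤ n, ∀ y ∈ ball x₀ ε \ {x₀}, AnalyticAt ℂ (f k) y)
    (hga : ∀ k ≤ n+1, ∀ y ∈ ball x₀ ε \ {x₀}, AnalyticAt ℂ (g k) y)
    (hha : ∀ k ≤ n, ∀ y ∈ ball x₀ ε \ {x₀}, AnalyticAt ℂ (h k) y)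
    (hfm : ∀ k ≤ n, MeromorphicAt (f k) x₀)
    (hgm : ∀ k ≤ n+1, MeromorphicAt (g k) x₀)
    (hhm : ∀ k ≤ n, MeromorphicAt (h k) x₀)
    (hpm : MeromorphicAt p x₀) (hqm : MeromorphicAt q x₀)
    (hg0 : ∀ y ∈ ball x₀ ε \ {x₀}, g 0 y = 1)
    (hode : ∀ E : ℂ, ∀ y ∈ ball x₀ ε \ {x₀},
      deriv (fun z => akPoly n f E z) y
        = -2 * I * E * akPoly n f E y + 2 * q y * akPoly (n + 1) g E y ∧
      deriv (fun z => akPoly (n + 1) g E z) y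
        = p y * akPoly n f E y + q y * akPoly n h E y ∧
      deriv (fun z => akPoly n h E z) y
        = 2 * I * E * akPoly n h E y + 2 * p y * akPoly (n + 1) g E y)
    (hpt : hpm.order ≠ ⊤) (hqt : hqm.order ≠ ⊤) :
    ((-2 : ℤ) : WithTop ℤ) ≤ hpm.order + hqm.order ∨
    ∃ E₀ : ℂ, ∃ ε' : ℝ, 0 < ε' ∧ ε' ≤ ε ∧
      ∀ y ∈ ball x₀ ε' \ {x₀},
        akPoly n f E₀ y = 0 ∧ akPoly (n+1) g E₀ y = 0 ∧ akPoly n h E₀ y = 0 := by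
  have hDo : IsOpen (ball x₀ ε \ {x₀}) := isOpen_ball.sdiff isClosed_singleton
  have hDc : IsPreconnected (ball x₀ ε \ {x₀}) :=
    (isPathConnected_pball hε).isConnected.isPreconnected
  have hFa : ∀ E : ℂ, ∀ y ∈ ball x₀ ε \ {x₀}, AnalyticAt ℂ (fun z => akPoly n f E z) y :=
    fun E y hy => akPoly_analyticAt (fun k hk => hfa k hk y hy)
  have hGa : ∀ E : ℂ, ∀ y ∈ ball x₀ ε \ {x₀}, AnalyticAt ℂ (fun z => akPoly (n+1) g E z) y :=
    fun E y hy => akPoly_analyticAt (fun k hk => hga k hk y hy)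
  have hHa : ∀ E : ℂ, ∀ y ∈ ball x₀ ε \ {x₀}, AnalyticAt ℂ (fun z => akPoly n h E z) y :=
    fun E y hy => akPoly_analyticAt (fun k hk => hha k hk y hy)
  -- Step 1: the conserved quantity is constant; pick a root E₀ of it.
  have hstep1 : ∃ E₀ : ℂ, ∀ y ∈ ball x₀ ε \ {x₀},
      akPoly (n+1) g E₀ y * akPoly (n+1) g E₀ y - akPoly n f E₀ y * akPoly n h E₀ y = 0 := by
    have hud : ∀ E : ℂ, ∀ y ∈ ball x₀ ε \ {x₀},
        deriv (fun z => akPoly (n+1) g E z * akPoly (n+1) g E z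
          - akPoly n f E z * akPoly n h E z) y = 0 := by
      intro E y hy
      obtain ⟨e1, e2, e3⟩ := hode E y hy
      have dF := (hFa E y hy).differentiableAt
      have dG := (hGa E y hy).differentiableAt
      have dH := (hHa E y hy).differentiableAt
      rw [deriv_fun_sub (dG.fun_mul dG) (dF.fun_mul dH), deriv_fun_mul dG dG, deriv_fun_mul dF dH, e1, e2, e3]
      ring
    have hua : ∀ E : ℂ, ∀ y ∈ ball x₀ ε \ {x₀},
        AnalyticAt ℂ (fun z => akPoly (n+1) g E z * akPoly (n+1) g E z
          - akPoly n f E z * akPoly n h E z) y :=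
      fun E y hy => ((hGa E y hy).mul (hGa E y hy)).sub ((hFa E y hy).mul (hHa E y hy))
    set x₁ : ℂ := x₀ + ((ε/2 : ℝ) : ℂ) with hx₁def
    have hx₁ : x₁ ∈ ball x₀ ε \ {x₀} := by
      constructor
      · rw [mem_ball, dist_eq, hx₁def]
        simp only [add_sub_cancel_left]
        rw [Complex.norm_real, Real.norm_eq_abs, abs_of_pos (by linarith)]
        linarith
      · simp only [mem_singleton_iff, hx₁def, add_eq_left]
        exact_mod_cast (by linarith : ε/2 ≠ 0)
    obtain ⟨E₀, hroot⟩ := exists_root_aux n (fun k => f k x₁) (fun k => g k x₁)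
      (fun k => h k x₁) (hg0 x₁ hx₁)
    refine ⟨E₀, fun y hy => ?_⟩
    have hconst := eq_const_of_deriv_zero hDo hDc (hua E₀) (hud E₀) hy hx₁
    rw [hconst]
    have hval : akPoly (n+1) g E₀ x₁ * akPoly (n+1) g E₀ x₁
        - akPoly n f E₀ x₁ * akPoly n h E₀ x₁ = 0 := by
      have h2 := hroot
      rw [pow_two] at h2
      exact h2
    exact hval
  obtain ⟨E₀, hu0⟩ := hstep1
  have hFm : MeromorphicAt (fun z => akPoly n f E₀ z) x₀ := akPoly_meromorphicAt hfm
  have hGm : MeromorphicAt (fun z => akPoly (n+1) g E₀ z) x₀ := akPoly_meromorphicAt hgm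
  have hHm : MeromorphicAt (fun z => akPoly n h E₀ z) x₀ := akPoly_meromorphicAt hhm
  rcases eq_or_ne hFm.order ⊤ with hFtop | hFtop
  · -- Case B : F(E₀,·) vanishes identically near x₀
    right
    obtain ⟨δ₁, hδ₁, hzF⟩ := exists_ball_of_eventually (hFm.order_eq_top_iff.mp hFtop)
    -- q·G vanishes near x₀
    have hqG : ∀ y ∈ ball x₀ (min δ₁ ε) \ {x₀}, q y * akPoly (n+1) g E₀ y = 0 := by
      intro y hy
      have hyδ : y ∈ ball x₀ δ₁ \ {x₀} := ⟨ball_subset_ball (min_le_left _ _) hy.1, hy.2⟩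
      have hyD : y ∈ ball x₀ ε \ {x₀} := ⟨ball_subset_ball (min_le_right _ _) hy.1, hy.2⟩
      have e1 := (hode E₀ y hyD).1
      have hop : IsOpen (ball x₀ δ₁ \ {x₀}) := isOpen_ball.sdiff isClosed_singleton
      have hder : deriv (fun z => akPoly n f E₀ z) y = 0 := by
        have hev : (fun z => akPoly n f E₀ z) =ᶠ[𝓝 y] (fun _ => (0:ℂ)) :=
          Filter.eventually_of_mem (hop.mem_nhds hyδ) (fun u hu => hzF u hu)
        rw [hev.deriv_eq, deriv_const]
      rw [hder, hzF y hyδ] at e1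
      have : 2 * q y * akPoly (n+1) g E₀ y = 0 := by
        rw [mul_zero, zero_add] at e1; exact e1.symm
      have h2 : (2:ℂ) ≠ 0 := two_ne_zero
      calc q y * akPoly (n+1) g E₀ y
          = (2:ℂ)⁻¹ * (2 * q y * akPoly (n+1) g E₀ y) := by field_simp
        _ = 0 := by rw [this, mul_zero]
    have hGtop : hGm.order = ⊤ := by
      have hmul : (hqm.mul hGm).order = ⊤ := by
        rw [MeromorphicAt.order_eq_top_iff]
        apply eventually_of_pball (lt_min hδ₁ hε)
        intro y hy
        exact hqG y hy
      rw [mero_order_mul hqm hGm] at hmul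
      rcases WithTop.add_eq_top.mp hmul with h' | h'
      · exact absurd h' hqt
      · exact h'
    obtain ⟨δ₂, hδ₂, hzG⟩ := exists_ball_of_eventually (hGm.order_eq_top_iff.mp hGtop)
    -- q·H vanishes near x₀
    have hqH : ∀ y ∈ ball x₀ (min (min δ₁ δ₂) ε) \ {x₀}, q y * akPoly n h E₀ y = 0 := by
      intro y hy
      have hyδ₁ : y ∈ ball x₀ δ₁ \ {x₀} :=
        ⟨ball_subset_ball ((min_le_left _ _).trans (min_le_left _ _)) hy.1, hy.2⟩
      have hyδ₂ : y ∈ ball x₀ δ₂ \ {x₀} :=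
        ⟨ball_subset_ball ((min_le_left _ _).trans (min_le_right _ _)) hy.1, hy.2⟩
      have hyD : y ∈ ball x₀ ε \ {x₀} := ⟨ball_subset_ball (min_le_right _ _) hy.1, hy.2⟩
      have e2 := (hode E₀ y hyD).2.1
      have hop : IsOpen (ball x₀ δ₂ \ {x₀}) := isOpen_ball.sdiff isClosed_singleton
      have hder : deriv (fun z => akPoly (n+1) g E₀ z) y = 0 := by
        have hev : (fun z => akPoly (n+1) g E₀ z) =ᶠ[𝓝 y] (fun _ => (0:ℂ)) :=
          Filter.eventually_of_mem (hop.mem_nhds hyδ₂) (fun u hu => hzG u hu)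
        rw [hev.deriv_eq, deriv_const]
      rw [hder, hzF y hyδ₁] at e2
      rw [mul_zero, zero_add] at e2
      exact e2.symm
    have hHtop : hHm.order = ⊤ := by
      have hmul : (hqm.mul hHm).order = ⊤ := by
        rw [MeromorphicAt.order_eq_top_iff]
        apply eventually_of_pball (lt_min (lt_min hδ₁ hδ₂) hε)
        intro y hy
        exact hqH y hy
      rw [mero_order_mul hqm hHm] at hmul
      rcases WithTop.add_eq_top.mp hmul with h' | h'
      · exact absurd h' hqt
      · exact h'
    obtain ⟨δ₃, hδ₃, hzH⟩ := exists_ball_of_eventually (hHm.order_eq_top_iff.mp hHtop)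
    refine ⟨E₀, min (min δ₁ (min δ₂ δ₃)) ε, lt_min (lt_min hδ₁ (lt_min hδ₂ hδ₃)) hε,
      min_le_right _ _, fun y hy => ?_⟩
    have hyδ₁ : y ∈ ball x₀ δ₁ \ {x₀} :=
      ⟨ball_subset_ball ((min_le_left _ _).trans (min_le_left _ _)) hy.1, hy.2⟩
    have hyδ₂ : y ∈ ball x₀ δ₂ \ {x₀} :=
      ⟨ball_subset_ball ((min_le_left _ _).trans ((min_le_right _ _).trans (min_le_left _ _)))
        hy.1, hy.2⟩
    have hyδ₃ : y ∈ ball x₀ δ₃ \ {x₀} :=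
      ⟨ball_subset_ball ((min_le_left _ _).trans ((min_le_right _ _).trans (min_le_right _ _)))
        hy.1, hy.2⟩
    exact ⟨hzF y hyδ₁, hzG y hyδ₂, hzH y hyδ₃⟩
  · -- Case A : finite order of F(E₀,·) at x₀
    left
    obtain ⟨mF, hmF⟩ := WithTop.ne_top_iff_exists.mp hFtop
    have hGGFH : hGm.order + hGm.order = hFm.order + hHm.order := by
      rw [← mero_order_mul hGm hGm, ← mero_order_mul hFm hHm]
      apply mero_order_congr
      apply eventually_of_pball hε
      intro y hy
      have := hu0 y hy
      show akPoly (n+1) g E₀ y * akPoly (n+1) g E₀ y = akPoly n f E₀ y * akPoly n h E₀ y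
      exact sub_eq_zero.mp this
    rcases eq_or_ne hGm.order ⊤ with hGtop | hGtop
    · -- G ≡ 0 near x₀ forces p ≡ 0 near x₀, contradiction
      exfalso
      have hHtop : hHm.order = ⊤ := by
        rw [hGtop, top_add] at hGGFH
        rcases WithTop.add_eq_top.mp hGGFH.symm with h' | h'
        · rw [h'] at hmF; exact absurd hmF.symm (by simp)
        · exact h'
      obtain ⟨δ₂, hδ₂, hzG⟩ := exists_ball_of_eventually (hGm.order_eq_top_iff.mp hGtop)
      obtain ⟨δ₃, hδ₃, hzH⟩ := exists_ball_of_eventually (hHm.order_eq_top_iff.mp hHtop)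
      have hpF : ∀ y ∈ ball x₀ (min (min δ₂ δ₃) ε) \ {x₀}, p y * akPoly n f E₀ y = 0 := by
        intro y hy
        have hyδ₂ : y ∈ ball x₀ δ₂ \ {x₀} :=
          ⟨ball_subset_ball ((min_le_left _ _).trans (min_le_left _ _)) hy.1, hy.2⟩
        have hyδ₃ : y ∈ ball x₀ δ₃ \ {x₀} :=
          ⟨ball_subset_ball ((min_le_left _ _).trans (min_le_right _ _)) hy.1, hy.2⟩
        have hyD : y ∈ ball x₀ ε \ {x₀} := ⟨ball_subset_ball (min_le_right _ _) hy.1, hy.2⟩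
        have e2 := (hode E₀ y hyD).2.1
        have hop : IsOpen (ball x₀ δ₂ \ {x₀}) := isOpen_ball.sdiff isClosed_singleton
        have hder : deriv (fun z => akPoly (n+1) g E₀ z) y = 0 := by
          have hev : (fun z => akPoly (n+1) g E₀ z) =ᶠ[𝓝 y] (fun _ => (0:ℂ)) :=
            Filter.eventually_of_mem (hop.mem_nhds hyδ₂) (fun u hu => hzG u hu)
          rw [hev.deriv_eq, deriv_const]
        rw [hder, hzH y hyδ₃] at e2
        rw [mul_zero, add_zero] at e2
        exact e2.symm
      have hptop : hpm.order = ⊤ := by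
        have hmul : (hpm.mul hFm).order = ⊤ := by
          rw [MeromorphicAt.order_eq_top_iff]
          apply eventually_of_pball (lt_min (lt_min hδ₂ hδ₃) hε)
          intro y hy
          exact hpF y hy
        rw [mero_order_mul hpm hFm] at hmul
        rcases WithTop.add_eq_top.mp hmul with h' | h'
        · exact h'
        · rw [h'] at hmF; exact absurd hmF.symm (by simp)
      exact absurd hptop hpt
    · -- Main bookkeeping case
      obtain ⟨mG, hmG⟩ := WithTop.ne_top_iff_exists.mp hGtop
      have hHfin : hHm.order ≠ ⊤ := by
        intro hcon
        rw [hcon, add_top, ← hmG, ← WithTop.coe_add] at hGGFH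
        exact absurd hGGFH (by simp)
      obtain ⟨mH, hmH⟩ := WithTop.ne_top_iff_exists.mp hHfin
      obtain ⟨ap, hap⟩ := WithTop.ne_top_iff_exists.mp hpt
      obtain ⟨bq, hbq⟩ := WithTop.ne_top_iff_exists.mp hqt
      have hsum : mG + mG = mF + mH := by
        rw [← hmG, ← hmF, ← hmH, ← WithTop.coe_add, ← WithTop.coe_add] at hGGFH
        exact_mod_cast hGGFH
      -- equation 1 : F' + 2iE₀F = 2·(q·G)
      have A1 : (fun y => deriv (fun z => akPoly n f E₀ z) y
            + (2*I*E₀) * akPoly n f E₀ y)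
          =ᶠ[𝓝[≠] x₀] (fun y => (2:ℂ) * (q y * akPoly (n+1) g E₀ y)) := by
        apply eventually_of_pball hε
        intro y hy
        have e1 := (hode E₀ y hy).1
        rw [e1]; ring
      have hRHS1m : MeromorphicAt (fun y => (2:ℂ) * (q y * akPoly (n+1) g E₀ y)) x₀ :=
        (MeromorphicAt.const 2 x₀).mul (hqm.mul hGm)
      have hRHS1o : hRHS1m.order = hqm.order + hGm.order := by
        have h1 := mero_order_mul (MeromorphicAt.const 2 x₀) (hqm.mul hGm)
        have h2 := mero_order_mul hqm hGm
        calc hRHS1m.order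
            = (MeromorphicAt.const 2 x₀).order + (hqm.mul hGm).order := h1
          _ = 0 + (hqm.mul hGm).order := by rw [order_const' two_ne_zero]
          _ = (hqm.mul hGm).order := zero_add _
          _ = hqm.order + hGm.order := h2
      obtain ⟨hD1, hD1top, hD1zero, hD1int⟩ := order_deriv_linear hFm (2*I*E₀)
      have hO1 : hD1.order = hqm.order + hGm.order := by
        rw [← hRHS1o]
        exact mero_order_congr hD1 hRHS1m A1
      -- equation 3 : H' - 2iE₀H = 2·(p·G)
      have A3 : (fun y => deriv (fun z => akPoly n h E₀ z) y
            + (-(2*I*E₀)) * akPoly n h E₀ y)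
          =ᶠ[𝓝[≠] x₀] (fun y => (2:ℂ) * (p y * akPoly (n+1) g E₀ y)) := by
        apply eventually_of_pball hε
        intro y hy
        have e3 := (hode E₀ y hy).2.2
        rw [e3]; ring
      have hRHS3m : MeromorphicAt (fun y => (2:ℂ) * (p y * akPoly (n+1) g E₀ y)) x₀ :=
        (MeromorphicAt.const 2 x₀).mul (hpm.mul hGm)
      have hRHS3o : hRHS3m.order = hpm.order + hGm.order := by
        have h1 := mero_order_mul (MeromorphicAt.const 2 x₀) (hpm.mul hGm)
        have h2 := mero_order_mul hpm hGm
        calc hRHS3m.order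
            = (MeromorphicAt.const 2 x₀).order + (hpm.mul hGm).order := h1
          _ = 0 + (hpm.mul hGm).order := by rw [order_const' two_ne_zero]
          _ = (hpm.mul hGm).order := zero_add _
          _ = hpm.order + hGm.order := h2
      obtain ⟨hD3, hD3top, hD3zero, hD3int⟩ := order_deriv_linear hHm (-(2*I*E₀))
      have hO3 : hD3.order = hpm.order + hGm.order := by
        rw [← hRHS3o]
        exact mero_order_congr hD3 hRHS3m A3
      -- convert goal to an integer inequality
      rw [← hap, ← hbq, ← WithTop.coe_add, WithTop.coe_le_coe]
      -- extract integer relations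
      rcases eq_or_ne mF 0 with hmF0 | hmF0
      · rcases eq_or_ne mH 0 with hmH0 | hmH0
        · -- both zero : mG = 0, a ≥ 0, b ≥ 0
          have hmG0 : mG = 0 := by omega
          have hb0 : 0 ≤ bq + mG := by
            have := hD1zero (by rw [← hmF, hmF0]; rfl)
            rw [hO1, ← hbq, ← hmG, ← WithTop.coe_add] at this
            exact_mod_cast this
          have ha0 : 0 ≤ ap + mG := by
            have := hD3zero (by rw [← hmH, hmH0]; rfl)
            rw [hO3, ← hap, ← hmG, ← WithTop.coe_add] at this
            exact_mod_cast this
          omega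
        · -- mF = 0, mH ≠ 0
          have hb0 : 0 ≤ bq + mG := by
            have := hD1zero (by rw [← hmF, hmF0]; rfl)
            rw [hO1, ← hbq, ← hmG, ← WithTop.coe_add] at this
            exact_mod_cast this
          have ha0 : ap + mG = mH - 1 := by
            have := hD3int mH hmH0 hmH.symm
            rw [hO3, ← hap, ← hmG, ← WithTop.coe_add] at this
            exact_mod_cast this
          omega
      · rcases eq_or_ne mH 0 with hmH0 | hmH0
        · have hb0 : bq + mG = mF - 1 := by
            have := hD1int mF hmF0 hmF.symm
            rw [hO1, ← hbq, ← hmG, ← WithTop.coe_add] at this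
            exact_mod_cast this
          have ha0 : 0 ≤ ap + mG := by
            have := hD3zero (by rw [← hmH, hmH0]; rfl)
            rw [hO3, ← hap, ← hmG, ← WithTop.coe_add] at this
            exact_mod_cast this
          omega
        · have hb0 : bq + mG = mF - 1 := by
            have := hD1int mF hmF0 hmF.symm
            rw [hO1, ← hbq, ← hmG, ← WithTop.coe_add] at this
            exact_mod_cast this
          have ha0 : ap + mG = mH - 1 := by
            have := hD3int mH hmH0 hmH.symm
            rw [hO3, ← hap, ← hmG, ← WithTop.coe_add] at this
            exact_mod_cast this
          omega

lemma deriv_akPoly' {n : ℕ} {f : ℕ → ℂ → ℂ} {E y : ℂ}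
    (h : ∀ k ≤ n, DifferentiableAt ℂ (f k) y) :
    deriv (fun z => akPoly n f E z) y = akPoly n (fun k z => deriv (f k) z) E y := by
  rw [deriv_akPoly h]; rfl

lemma akPoly_contE {a : ℕ} {A : ℕ → ℂ → ℂ} {y : ℂ} :
    Continuous (fun E => akPoly a A E y) := by
  unfold akPoly
  exact continuous_finset_sum _ (fun ℓ _ => continuous_const.mul (continuous_pow ℓ))

lemma key_lemma (p q : ℂ → ℂ) (x₀ : ℂ) (hpm : MeromorphicAt p x₀) (hqm : MeromorphicAt q x₀)
    (hpt : hpm.order ≠ ⊤) (hqt : hqm.order ≠ ⊤) :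
    ∀ n : ℕ, ∀ (f g h : ℕ → ℂ → ℂ) (ε : ℝ), 0 < ε →
    (∀ k ≤ n, ∀ y ∈ ball x₀ ε \ {x₀}, AnalyticAt ℂ (f k) y) →
    (∀ k ≤ n+1, ∀ y ∈ ball x₀ ε \ {x₀}, AnalyticAt ℂ (g k) y) →
    (∀ k ≤ n, ∀ y ∈ ball x₀ ε \ {x₀}, AnalyticAt ℂ (h k) y) →
    (∀ k ≤ n, MeromorphicAt (f k) x₀) →
    (∀ k ≤ n+1, MeromorphicAt (g k) x₀) →
    (∀ k ≤ n, MeromorphicAt (h k) x₀) →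
    (∀ y ∈ ball x₀ ε \ {x₀}, f 0 y = -I * q y) →
    (∀ y ∈ ball x₀ ε \ {x₀}, g 0 y = 1) →
    (∀ E : ℂ, ∀ y ∈ ball x₀ ε \ {x₀},
      deriv (fun z => akPoly n f E z) y
        = -2 * I * E * akPoly n f E y + 2 * q y * akPoly (n + 1) g E y ∧
      deriv (fun z => akPoly (n + 1) g E z) y
        = p y * akPoly n f E y + q y * akPoly n h E y ∧
      deriv (fun z => akPoly n h E z) y
        = 2 * I * E * akPoly n h E y + 2 * p y * akPoly (n + 1) g E y) →
    ((-2 : ℤ) : WithTop ℤ) ≤ hpm.order + hqm.order := by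
  intro n
  induction n with
  | zero =>
    intro f g h ε hε hfa hga hha hfm hgm hhm hf0 hg0 hode
    rcases dichotomy 0 f g h p q x₀ ε hε hfa hga hha hfm hgm hhm hpm hqm hg0 hode hpt hqt with
      done | ⟨E₀, ε', hε', hle, hz⟩
    · exact done
    · exfalso
      have hq0 : ∀ y ∈ ball x₀ ε' \ {x₀}, q y = 0 := by
        intro y hy
        have hyD : y ∈ ball x₀ ε \ {x₀} := ⟨ball_subset_ball hle hy.1, hy.2⟩
        have h1 := (hz y hy).1
        rw [akPoly_zero, hf0 y hyD] at h1
        rcases mul_eq_zero.mp h1 with h' | h'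
        · exact absurd h' (by simp [I_ne_zero])
        · exact h'
      have htop : hqm.order = ⊤ := by
        rw [MeromorphicAt.order_eq_top_iff]
        exact eventually_of_pball hε' hq0
      exact hqt htop
  | succ m ih =>
    intro f g h ε hε hfa hga hha hfm hgm hhm hf0 hg0 hode
    rcases dichotomy (m+1) f g h p q x₀ ε hε hfa hga hha hfm hgm hhm hpm hqm hg0 hode hpt hqt
      with done | ⟨E₀, ε', hε', hle, hz⟩
    · exact done
    · -- Horner reduction to parameter m
      set f' : ℕ → ℂ → ℂ := fun k z => akPoly k f E₀ z with hf'def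
      set g' : ℕ → ℂ → ℂ := fun k z => akPoly k g E₀ z with hg'def
      set h' : ℕ → ℂ → ℂ := fun k z => akPoly k h E₀ z with hh'def
      have hsub : ∀ y, y ∈ ball x₀ ε' \ {x₀} → y ∈ ball x₀ ε \ {x₀} :=
        fun y hy => ⟨ball_subset_ball hle hy.1, hy.2⟩
      have hf'a : ∀ k ≤ m, ∀ y ∈ ball x₀ ε' \ {x₀}, AnalyticAt ℂ (f' k) y :=
        fun k hk y hy => akPoly_analyticAt
          (fun j hj => hfa j ((hj.trans hk).trans (Nat.le_succ m)) y (hsub y hy))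
      have hg'a : ∀ k ≤ m+1, ∀ y ∈ ball x₀ ε' \ {x₀}, AnalyticAt ℂ (g' k) y :=
        fun k hk y hy => akPoly_analyticAt
          (fun j hj => hga j ((hj.trans hk).trans (Nat.le_succ (m+1))) y (hsub y hy))
      have hh'a : ∀ k ≤ m, ∀ y ∈ ball x₀ ε' \ {x₀}, AnalyticAt ℂ (h' k) y :=
        fun k hk y hy => akPoly_analyticAt
          (fun j hj => hha j ((hj.trans hk).trans (Nat.le_succ m)) y (hsub y hy))
      have hf'm : ∀ k ≤ m, MeromorphicAt (f' k) x₀ :=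
        fun k hk => akPoly_meromorphicAt (fun j hj => hfm j ((hj.trans hk).trans (Nat.le_succ m)))
      have hg'm : ∀ k ≤ m+1, MeromorphicAt (g' k) x₀ :=
        fun k hk => akPoly_meromorphicAt
          (fun j hj => hgm j ((hj.trans hk).trans (Nat.le_succ (m+1))))
      have hh'm : ∀ k ≤ m, MeromorphicAt (h' k) x₀ :=
        fun k hk => akPoly_meromorphicAt (fun j hj => hhm j ((hj.trans hk).trans (Nat.le_succ m)))
      have hf'0 : ∀ y ∈ ball x₀ ε' \ {x₀}, f' 0 y = -I * q y := by
        intro y hy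
        show akPoly 0 f E₀ y = -I * q y
        rw [akPoly_zero]
        exact hf0 y (hsub y hy)
      have hg'0 : ∀ y ∈ ball x₀ ε' \ {x₀}, g' 0 y = 1 := by
        intro y hy
        show akPoly 0 g E₀ y = 1
        rw [akPoly_zero]
        exact hg0 y (hsub y hy)
      -- the reduced zero-curvature equations
      have hode' : ∀ E : ℂ, ∀ y ∈ ball x₀ ε' \ {x₀},
          deriv (fun z => akPoly m f' E z) y
            = -2 * I * E * akPoly m f' E y + 2 * q y * akPoly (m + 1) g' E y ∧
          deriv (fun z => akPoly (m + 1) g' E z) y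
            = p y * akPoly m f' E y + q y * akPoly m h' E y ∧
          deriv (fun z => akPoly m h' E z) y
            = 2 * I * E * akPoly m h' E y + 2 * p y * akPoly (m + 1) g' E y := by
        intro E y hy
        have hyD : y ∈ ball x₀ ε \ {x₀} := hsub y hy
        obtain ⟨hzF0, hzG0, hzH0⟩ := hz y hy
        have hFd : ∀ E' : ℂ, DifferentiableAt ℂ (fun z => akPoly (m+1) f E' z) y :=
          fun E' => (akPoly_analyticAt (fun k hk => hfa k hk y hyD)).differentiableAt
        have hGd : ∀ E' : ℂ, DifferentiableAt ℂ (fun z => akPoly (m+1+1) g E' z) y :=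
          fun E' => (akPoly_analyticAt (fun k hk => hga k hk y hyD)).differentiableAt
        have hHd : ∀ E' : ℂ, DifferentiableAt ℂ (fun z => akPoly (m+1) h E' z) y :=
          fun E' => (akPoly_analyticAt (fun k hk => hha k hk y hyD)).differentiableAt
        have hder0F : deriv (fun z => akPoly (m+1) f E₀ z) y = 0 := by
          rw [(hode E₀ y hyD).1, hzF0, hzG0]; ring
        have hder0G : deriv (fun z => akPoly (m+1+1) g E₀ z) y = 0 := by
          rw [(hode E₀ y hyD).2.1, hzF0, hzH0]; ring
        have hder0H : deriv (fun z => akPoly (m+1) h E₀ z) y = 0 := by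
          rw [(hode E₀ y hyD).2.2, hzH0, hzG0]; ring
        have hd1 : ∀ k ≤ m, DifferentiableAt ℂ (f' k) y :=
          fun k hk => (hf'a k hk y hy).differentiableAt
        have hd2 : ∀ k ≤ m+1, DifferentiableAt ℂ (g' k) y :=
          fun k hk => (hg'a k hk y hy).differentiableAt
        have hd3 : ∀ k ≤ m, DifferentiableAt ℂ (h' k) y :=
          fun k hk => (hh'a k hk y hy).differentiableAt
        have hred1 : ∀ E' : ℂ, akPoly (m+1) f E' y = (E' - E₀) * akPoly m f' E' y := by
          intro E'
          rw [akPoly_horner m f E' E₀ y, hzF0, add_zero]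
        have hred2 : ∀ E' : ℂ, akPoly (m+1+1) g E' y = (E' - E₀) * akPoly (m+1) g' E' y := by
          intro E'
          rw [akPoly_horner (m+1) g E' E₀ y, hzG0, add_zero]
        have hred3 : ∀ E' : ℂ, akPoly (m+1) h E' y = (E' - E₀) * akPoly m h' E' y := by
          intro E'
          rw [akPoly_horner m h E' E₀ y, hzH0, add_zero]
        refine ⟨?_, ?_, ?_⟩
        · -- equation 1
          rw [deriv_akPoly' hd1]
          have hcL : Continuous (fun E' => akPoly m (fun k z => deriv (f' k) z) E' y) :=
            akPoly_contE
          have hcR : Continuous (fun E' => -2 * I * E' * akPoly m f' E' y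
              + 2 * q y * akPoly (m + 1) g' E' y) :=
            (((continuous_const.mul continuous_id).mul akPoly_contE)).add
              (continuous_const.mul akPoly_contE)
          have hext : EqOn (fun E' => akPoly m (fun k z => deriv (f' k) z) E' y)
              (fun E' => -2 * I * E' * akPoly m f' E' y
                + 2 * q y * akPoly (m + 1) g' E' y) {E₀}ᶜ := by
            intro E' hE'
            have hEne : E' - E₀ ≠ 0 := sub_ne_zero.mpr (by simpa using hE')
            simp only
            rw [← deriv_akPoly' hd1]
            have hfun : (fun z => akPoly m f' E' z)
                = fun z => (E' - E₀)⁻¹ * (akPoly (m+1) f E' z - akPoly (m+1) f E₀ z) := by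
              funext z
              rw [akPoly_horner m f E' E₀ z]
              field_simp
              rw [hf'def]; ring
            rw [hfun, deriv_const_mul _ ((hFd E').fun_sub (hFd E₀)), deriv_fun_sub (hFd E') (hFd E₀),
              (hode E' y hyD).1, hder0F, hred1 E', hred2 E']
            field_simp
            ring
          have hfe := Continuous.ext_on (dense_compl_singleton E₀) hcL hcR hext
          exact congrFun hfe E
        · -- equation 2
          rw [deriv_akPoly' hd2]
          have hcL : Continuous (fun E' => akPoly (m+1) (fun k z => deriv (g' k) z) E' y) :=
            akPoly_contE
          have hcR : Continuous (fun E' => p y * akPoly m f' E' y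
              + q y * akPoly m h' E' y) :=
            (continuous_const.mul akPoly_contE).add (continuous_const.mul akPoly_contE)
          have hext : EqOn (fun E' => akPoly (m+1) (fun k z => deriv (g' k) z) E' y)
              (fun E' => p y * akPoly m f' E' y + q y * akPoly m h' E' y) {E₀}ᶜ := by
            intro E' hE'
            have hEne : E' - E₀ ≠ 0 := sub_ne_zero.mpr (by simpa using hE')
            simp only
            rw [← deriv_akPoly' hd2]
            have hfun : (fun z => akPoly (m+1) g' E' z)
                = fun z => (E' - E₀)⁻¹ * (akPoly (m+1+1) g E' z - akPoly (m+1+1) g E₀ z) := by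
              funext z
              rw [akPoly_horner (m+1) g E' E₀ z]
              field_simp
              rw [hg'def]; ring
            rw [hfun, deriv_const_mul _ ((hGd E').fun_sub (hGd E₀)), deriv_fun_sub (hGd E') (hGd E₀),
              (hode E' y hyD).2.1, hder0G, hred1 E', hred3 E']
            field_simp
            ring
          have hfe := Continuous.ext_on (dense_compl_singleton E₀) hcL hcR hext
          exact congrFun hfe E
        · -- equation 3
          rw [deriv_akPoly' hd3]
          have hcL : Continuous (fun E' => akPoly m (fun k z => deriv (h' k) z) E' y) :=
            akPoly_contE
          have hcR : Continuous (fun E' => 2 * I * E' * akPoly m h' E' y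
              + 2 * p y * akPoly (m + 1) g' E' y) :=
            (((continuous_const.mul continuous_id).mul akPoly_contE)).add
              (continuous_const.mul akPoly_contE)
          have hext : EqOn (fun E' => akPoly m (fun k z => deriv (h' k) z) E' y)
              (fun E' => 2 * I * E' * akPoly m h' E' y
                + 2 * p y * akPoly (m + 1) g' E' y) {E₀}ᶜ := by
            intro E' hE'
            have hEne : E' - E₀ ≠ 0 := sub_ne_zero.mpr (by simpa using hE')
            simp only
            rw [← deriv_akPoly' hd3]
            have hfun : (fun z => akPoly m h' E' z)
                = fun z => (E' - E₀)⁻¹ * (akPoly (m+1) h E' z - akPoly (m+1) h E₀ z) := by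
              funext z
              rw [akPoly_horner m h E' E₀ z]
              field_simp
              rw [hh'def]; ring
            rw [hfun, deriv_const_mul _ ((hHd E').fun_sub (hHd E₀)), deriv_fun_sub (hHd E') (hHd E₀),
              (hode E' y hyD).2.2, hder0H, hred3 E', hred2 E']
            field_simp
            ring
          have hfe := Continuous.ext_on (dense_compl_singleton E₀) hcL hcR hext
          exact congrFun hfe E
      exact ih f' g' h' ε' hε' hf'a hg'a hh'a hf'm hg'm hh'm hf'0 hg'0 hode'
lemma exists_pball_analytic {w : ℂ → ℂ} {x₀ : ℂ} (hw : MeromorphicAt w x₀) :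
    ∃ δ > 0, ∀ y ∈ ball x₀ δ \ {x₀}, AnalyticAt ℂ w y := by
  obtain ⟨N, hN⟩ := hw
  obtain ⟨δ, hδ, hb⟩ := Metric.eventually_nhds_iff_ball.mp hN.eventually_analyticAt
  refine ⟨δ, hδ, fun y hy => ?_⟩
  have h1 : AnalyticAt ℂ (fun z => (z - x₀) ^ N • w z) y := hb y hy.1
  have h2 : AnalyticAt ℂ (fun z : ℂ => ((z - x₀) ^ N)⁻¹) y := by
    apply AnalyticAt.inv
    · exact (analyticAt_id.sub analyticAt_const).pow N
    · exact pow_ne_zero N (sub_ne_zero.mpr hy.2)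
  have h3 := h2.mul h1
  apply h3.congr
  apply Filter.eventually_of_mem
    (((isOpen_ball.sdiff isClosed_singleton)).mem_nhds hy)
  intro u hu
  have hne : u - x₀ ≠ 0 := sub_ne_zero.mpr hu.2
  show ((u - x₀) ^ N)⁻¹ * ((u - x₀) ^ N • w u) = w u
  rw [smul_eq_mul, ← mul_assoc, inv_mul_cancel₀ (pow_ne_zero N hne), one_mul]

lemma exists_pball_analytic_family {x₀ : ℂ} (F : ℕ → ℂ → ℂ) (N : ℕ)
    (hF : ∀ k ≤ N, MeromorphicAt (F k) x₀) :
    ∃ δ > 0, ∀ k ≤ N, ∀ y ∈ ball x₀ δ \ {x₀}, AnalyticAt ℂ (F k) y := by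
  induction N with
  | zero =>
    obtain ⟨δ, hδ, hb⟩ := exists_pball_analytic (hF 0 le_rfl)
    exact ⟨δ, hδ, fun k hk y hy => by rw [Nat.le_zero.mp hk]; exact hb y hy⟩
  | succ M ihM =>
    obtain ⟨δ₁, hδ₁, hb₁⟩ := ihM (fun k hk => hF k (hk.trans (Nat.le_succ M)))
    obtain ⟨δ₂, hδ₂, hb₂⟩ := exists_pball_analytic (hF (M+1) le_rfl)
    refine ⟨min δ₁ δ₂, lt_min hδ₁ hδ₂, fun k hk y hy => ?_⟩
    rcases Nat.lt_succ_iff_lt_or_eq.mp (Nat.lt_succ_of_le hk) with h' | h'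
    · exact hb₁ k (Nat.lt_succ_iff.mp h')
        y ⟨ball_subset_ball (min_le_left _ _) hy.1, hy.2⟩
    · rw [h']
      exact hb₂ y ⟨ball_subset_ball (min_le_right _ _) hy.1, hy.2⟩

theorem order_sum_ge_neg_two'
    (p q : ℂ → ℂ)
    (hpm : MeromorphicOn p Set.univ) (hqm : MeromorphicOn q Set.univ)
    (h : IsAGAKNS p q)
    (hp0 : ∃ x, p x ≠ 0) (hq0 : ∃ x, q x ≠ 0)
    (x₀ : ℂ) :
    ((-2 : ℤ) : WithTop ℤ) ≤
      (hpm x₀ (Set.mem_univ x₀)).order + (hqm x₀ (Set.mem_univ x₀)).order := by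
  obtain ⟨n, f, g, hh, S, hpmero, hqmero, hfmero, hgmero, hhmero, hScnt, hScl,
    hAnal, hf0, hg0, hh0, hzc⟩ := h
  set hp : MeromorphicAt p x₀ := hpm x₀ (Set.mem_univ x₀)
  set hq : MeromorphicAt q x₀ := hqm x₀ (Set.mem_univ x₀)
  rcases eq_or_ne hp.order ⊤ with hpt | hpt
  · rw [hpt, top_add]; exact le_top
  rcases eq_or_ne hq.order ⊤ with hqt | hqt
  · rw [hqt, add_top]; exact le_top
  -- a common punctured ball on which everything is analytic
  obtain ⟨δf, hδf, hbf⟩ := exists_pball_analytic_family f n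
    (fun k _ => hfmero k x₀ (Set.mem_univ x₀))
  obtain ⟨δg, hδg, hbg⟩ := exists_pball_analytic_family g (n+1)
    (fun k _ => hgmero k x₀ (Set.mem_univ x₀))
  obtain ⟨δh, hδh, hbh⟩ := exists_pball_analytic_family hh n
    (fun k _ => hhmero k x₀ (Set.mem_univ x₀))
  obtain ⟨δp, hδp, hbp⟩ := exists_pball_analytic hp
  obtain ⟨δq, hδq, hbq⟩ := exists_pball_analytic hq
  set ε : ℝ := min (min δf δg) (min δh (min δp δq)) with hεdef
  have hε : 0 < ε := lt_min (lt_min hδf hδg) (lt_min hδh (lt_min hδp hδq))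
  have hfa : ∀ k ≤ n, ∀ y ∈ ball x₀ ε \ {x₀}, AnalyticAt ℂ (f k) y :=
    fun k hk y hy => hbf k hk y
      ⟨ball_subset_ball ((min_le_left _ _).trans (min_le_left _ _)) hy.1, hy.2⟩
  have hga : ∀ k ≤ n+1, ∀ y ∈ ball x₀ ε \ {x₀}, AnalyticAt ℂ (g k) y :=
    fun k hk y hy => hbg k hk y
      ⟨ball_subset_ball ((min_le_left _ _).trans (min_le_right _ _)) hy.1, hy.2⟩
  have hha : ∀ k ≤ n, ∀ y ∈ ball x₀ ε \ {x₀}, AnalyticAt ℂ (hh k) y :=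
    fun k hk y hy => hbh k hk y
      ⟨ball_subset_ball ((min_le_right _ _).trans (min_le_left _ _)) hy.1, hy.2⟩
  have hpa : ∀ y ∈ ball x₀ ε \ {x₀}, AnalyticAt ℂ p y :=
    fun y hy => hbp y
      ⟨ball_subset_ball
        ((min_le_right _ _).trans ((min_le_right _ _).trans (min_le_left _ _))) hy.1, hy.2⟩
  have hqa : ∀ y ∈ ball x₀ ε \ {x₀}, AnalyticAt ℂ q y :=
    fun y hy => hbq y
      ⟨ball_subset_ball
        ((min_le_right _ _).trans ((min_le_right _ _).trans (min_le_right _ _))) hy.1, hy.2⟩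
  -- extend the zero-curvature equations from the complement of S to the whole punctured ball
  have hDo : IsOpen (ball x₀ ε \ {x₀}) := isOpen_ball.sdiff isClosed_singleton
  have hode : ∀ E : ℂ, ∀ y ∈ ball x₀ ε \ {x₀},
      deriv (fun z => akPoly n f E z) y
        = -2 * I * E * akPoly n f E y + 2 * q y * akPoly (n + 1) g E y ∧
      deriv (fun z => akPoly (n + 1) g E z) y
        = p y * akPoly n f E y + q y * akPoly n hh E y ∧
      deriv (fun z => akPoly n hh E z) y
        = 2 * I * E * akPoly n hh E y + 2 * p y * akPoly (n + 1) g E y := by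
    intro E
    have hFa : ∀ y ∈ ball x₀ ε \ {x₀}, AnalyticAt ℂ (fun z => akPoly n f E z) y :=
      fun y hy => akPoly_analyticAt (fun k hk => hfa k hk y hy)
    have hGa : ∀ y ∈ ball x₀ ε \ {x₀}, AnalyticAt ℂ (fun z => akPoly (n+1) g E z) y :=
      fun y hy => akPoly_analyticAt (fun k hk => hga k hk y hy)
    have hHa : ∀ y ∈ ball x₀ ε \ {x₀}, AnalyticAt ℂ (fun z => akPoly n hh E z) y :=
      fun y hy => akPoly_analyticAt (fun k hk => hha k hk y hy)
    have e1 := eqOn_of_eqOn_compl_countable hDo hScnt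
      (v := fun y => deriv (fun z => akPoly n f E z) y)
      (w := fun y => -2 * I * E * akPoly n f E y + 2 * q y * akPoly (n + 1) g E y)
      (fun y hy => (analyticAt_deriv (hFa y hy)).continuousAt)
      (fun y hy => ((analyticAt_const.mul (hFa y hy)).add
        ((analyticAt_const.mul (hqa y hy)).mul (hGa y hy))).continuousAt)
      (fun y _ hyS => ((hzc E) y hyS).1)
    have e2 := eqOn_of_eqOn_compl_countable hDo hScnt
      (v := fun y => deriv (fun z => akPoly (n+1) g E z) y)
      (w := fun y => p y * akPoly n f E y + q y * akPoly n hh E y)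
      (fun y hy => (analyticAt_deriv (hGa y hy)).continuousAt)
      (fun y hy => (((hpa y hy).mul (hFa y hy)).add
        ((hqa y hy).mul (hHa y hy))).continuousAt)
      (fun y _ hyS => ((hzc E) y hyS).2.1)
    have e3 := eqOn_of_eqOn_compl_countable hDo hScnt
      (v := fun y => deriv (fun z => akPoly n hh E z) y)
      (w := fun y => 2 * I * E * akPoly n hh E y + 2 * p y * akPoly (n + 1) g E y)
      (fun y hy => (analyticAt_deriv (hHa y hy)).continuousAt)
      (fun y hy => ((analyticAt_const.mul (hHa y hy)).add
        ((analyticAt_const.mul (hpa y hy)).mul (hGa y hy))).continuousAt)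
      (fun y _ hyS => ((hzc E) y hyS).2.2)
    exact fun y hy => ⟨e1 y hy, e2 y hy, e3 y hy⟩
  exact key_lemma p q x₀ hp hq hpt hqt n f g hh ε hε hfa hga hha
    (fun k _ => hfmero k x₀ (Set.mem_univ x₀))
    (fun k _ => hgmero k x₀ (Set.mem_univ x₀))
    (fun k _ => hhmero k x₀ (Set.mem_univ x₀))
    (fun y _ => by rw [hf0])
    (fun y _ => by rw [hg0])
    hode

/-- If `(p,q)` is a meromorphic algebro-geometric AKNS potential with `p`
and `q` not identically zero, then `ord_{x₀}(p) + ord_{x₀}(q) ≥ -2` at every `x₀ ∈ ℂ`. -/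
theorem order_sum_ge_neg_two
    (p q : ℂ → ℂ)
    (hpm : MeromorphicOn p Set.univ) (hqm : MeromorphicOn q Set.univ)
    (h : IsAGAKNS p q)
    (hp0 : ∃ x, p x ≠ 0) (hq0 : ∃ x, q x ≠ 0)
    (x₀ : ℂ) :
    ((-2 : ℤ) : WithTop ℤ) ≤
      meromorphicOrderAt p x₀ + meromorphicOrderAt q x₀ := by
  exact order_sum_ge_neg_two' p q hpm hqm h hp0 hq0 x₀
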